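/- Let H be a finite-dimensional real inner product space, M ⊆ H a closed convex set (e.g. a closed ball), F : H → ℝ continuously differentiable with ∇F Lipschitz continuous on M with constant L_M > 0, G : H → ℝ convex and continuous, and E = F + G. Let (α_k) satisfy 0 < α_k < 1/L_M, let Φ₀ ∈ M, and define Φ_{k+1} as the minimizer over Φ ∈ H of G(Φ) + ⟨∇F(Φ_k), Φ − Φ_k⟩ + (1/(2α_k))‖Φ − Φ_k‖². If Φ_k ∈ M for all k ≥ 0, then for every k: E(Φ_k) − E(Φ_{k+1}) ≥ (1/(2α_k) − L_M/2)‖Φ_{k+1} − Φ_k‖². -/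

import Mathlib

open RealInnerProductSpace

/-- Descent lemma: if `∇F` is `L`-Lipschitz along the segment from `x` to `y`,
then `F y ≤ F x + ⟪∇F x, y - x⟫ + L/2 * ‖y - x‖²`. -/
lemma descent_lemma_aux
    {H : Type*} [NormedAddCommGroup H] [InnerProductSpace ℝ H] [CompleteSpace H]
    (M : Set H) (hM_convex : Convex ℝ M)
    (F : H → ℝ) (L : ℝ) (hL : 0 < L)
    (hF : ContDiff ℝ 1 F)
    (hF_lip : ∀ x ∈ M, ∀ y ∈ M, ‖gradient F x - gradient F y‖ ≤ L * ‖x - y‖)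
    (x y : H) (hx : x ∈ M) (hy : y ∈ M) :
    F y ≤ F x + ⟪gradient F x, y - x⟫ + L / 2 * ‖y - x‖ ^ 2 := by
  set d := y - x with hd
  have hFdiff : Differentiable ℝ F := hF.differentiable one_ne_zero
  -- the auxiliary one-variable function
  set g : ℝ → ℝ := fun t => F (x + t • d) - t * ⟪gradient F x, d⟫ - L / 2 * t ^ 2 * ‖d‖ ^ 2
    with hg
  have hfderiv : ∀ p : H, fderiv ℝ F p = InnerProductSpace.toDual ℝ H (gradient F p) := by
    intro p
    exact (hasGradientAt_iff_hasFDerivAt.mp (hFdiff p).hasGradientAt).fderiv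
  have hgderiv : ∀ t : ℝ, HasDerivAt g
      (⟪gradient F (x + t • d), d⟫ - ⟪gradient F x, d⟫ - L * t * ‖d‖ ^ 2) t := by
    intro t
    have hc : HasDerivAt (fun t : ℝ => x + t • d) d t := by
      simpa using ((hasDerivAt_id t).smul_const d).const_add x
    have h1 : HasDerivAt (fun t : ℝ => F (x + t • d)) ⟪gradient F (x + t • d), d⟫ t := by
      have hF' : HasFDerivAt F (fderiv ℝ F (x + t • d)) (x + t • d) :=
        (hFdiff (x + t • d)).hasFDerivAt
      have := hF'.comp_hasDerivAt t hc
      rw [hfderiv, InnerProductSpace.toDual_apply_apply] at this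
      exact this
    have h2 : HasDerivAt (fun t : ℝ => t * ⟪gradient F x, d⟫) ⟪gradient F x, d⟫ t := by
      simpa using (hasDerivAt_id t).mul_const (⟪gradient F x, d⟫)
    have h3 : HasDerivAt (fun t : ℝ => L / 2 * t ^ 2 * ‖d‖ ^ 2) (L * t * ‖d‖ ^ 2) t := by
      have := ((hasDerivAt_pow 2 t).const_mul (L / 2)).mul_const (‖d‖ ^ 2)
      refine this.congr_deriv ?_
      rw [show (2:ℕ) - 1 = 1 from rfl]
      push_cast
      ring
    exact (h1.sub h2).sub h3
  have key : g 1 ≤ g 0 := by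
    have hder_nonpos : ∀ t ∈ interior (Set.Icc (0:ℝ) 1), deriv g t ≤ 0 := by
      intro t ht
      rw [interior_Icc] at ht
      rw [(hgderiv t).deriv]
      have hmem : x + t • d ∈ M := hM_convex.add_smul_sub_mem hx hy ⟨ht.1.le, ht.2.le⟩
      have hinner : ⟪gradient F (x + t • d) - gradient F x, d⟫
          ≤ ‖gradient F (x + t • d) - gradient F x‖ * ‖d‖ := real_inner_le_norm _ _
      have hlip : ‖gradient F (x + t • d) - gradient F x‖ ≤ L * (t * ‖d‖) := by
        have := hF_lip _ hmem _ hx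
        simpa [norm_smul, abs_of_pos ht.1, mul_assoc] using this
      have hdn : (0:ℝ) ≤ ‖d‖ := norm_nonneg _
      have : ⟪gradient F (x + t • d), d⟫ - ⟪gradient F x, d⟫ ≤ L * t * ‖d‖ ^ 2 := by
        rw [← inner_sub_left]
        calc ⟪gradient F (x + t • d) - gradient F x, d⟫
            ≤ ‖gradient F (x + t • d) - gradient F x‖ * ‖d‖ := hinner
          _ ≤ L * (t * ‖d‖) * ‖d‖ := by nlinarith
          _ = L * t * ‖d‖ ^ 2 := by ring
      linarith
    have hcont : ContinuousOn g (Set.Icc 0 1) :=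
      fun t _ => (hgderiv t).continuousAt.continuousWithinAt
    have hdiff : DifferentiableOn ℝ g (interior (Set.Icc (0:ℝ) 1)) :=
      fun t _ => ((hgderiv t).differentiableAt).differentiableWithinAt
    exact antitoneOn_of_deriv_nonpos (convex_Icc 0 1) hcont hdiff hder_nonpos
      (Set.left_mem_Icc.mpr zero_le_one) (Set.right_mem_Icc.mpr zero_le_one) zero_le_one
  simp only [hg, one_smul, zero_smul, add_zero] at key
  have hxy : x + d = y := by rw [hd]; abel
  rw [hxy] at key
  linarith

/-- Sufficient decrease of the proximal gradient iterates (Proposition 4.1):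
if `∇F` is `L_M`-Lipschitz on a closed convex set `M` containing all iterates,
`G` is convex continuous, and the step sizes satisfy `0 < α_k < 1/L_M`, then
`E (Φ k) - E (Φ (k+1)) ≥ (1/(2 α_k) - L_M/2) ‖Φ (k+1) - Φ k‖²` for all `k`. -/
theorem prox_grad_sufficient_decrease
    {H : Type*} [NormedAddCommGroup H] [InnerProductSpace ℝ H]
    [FiniteDimensional ℝ H]
    (M : Set H) (hM_closed : IsClosed M) (hM_convex : Convex ℝ M)
    (F G : H → ℝ) (L_M : ℝ) (hL : 0 < L_M)
    (hF : ContDiff ℝ 1 F)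
    (hF_lip : ∀ x ∈ M, ∀ y ∈ M, ‖gradient F x - gradient F y‖ ≤ L_M * ‖x - y‖)
    (hG_convex : ConvexOn ℝ Set.univ G) (hG_cont : Continuous G)
    (E : H → ℝ) (hE : E = fun x => F x + G x)
    (α : ℕ → ℝ) (hα : ∀ k : ℕ, 0 < α k ∧ α k < 1 / L_M)
    (Φ : ℕ → H)
    (hstep : ∀ k : ℕ, ∀ z : H,
      G (Φ (k + 1)) + ⟪gradient F (Φ k), Φ (k + 1) - Φ k⟫
          + (1 / (2 * α k)) * ‖Φ (k + 1) - Φ k‖ ^ 2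
        ≤ G z + ⟪gradient F (Φ k), z - Φ k⟫ + (1 / (2 * α k)) * ‖z - Φ k‖ ^ 2)
    (hmem : ∀ k : ℕ, Φ k ∈ M) :
    ∀ k : ℕ,
      (1 / (2 * α k) - L_M / 2) * ‖Φ (k + 1) - Φ k‖ ^ 2 ≤ E (Φ k) - E (Φ (k + 1)) := by
  intro k
  have hG : G (Φ (k+1)) + ⟪gradient F (Φ k), Φ (k+1) - Φ k⟫
      + (1 / (2 * α k)) * ‖Φ (k+1) - Φ k‖ ^ 2 ≤ G (Φ k) := by
    have := hstep k (Φ k)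
    simpa using this
  have hdesc : F (Φ (k+1)) ≤ F (Φ k) + ⟪gradient F (Φ k), Φ (k+1) - Φ k⟫
      + L_M / 2 * ‖Φ (k+1) - Φ k‖ ^ 2 :=
    descent_lemma_aux M hM_convex F L_M hL hF hF_lip (Φ k) (Φ (k+1)) (hmem k) (hmem (k+1))
  rw [hE]
  simp only
  linarith
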